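/- Let Λ ∈ (ℝ_{>0})^N. Then there exist h ∈ {1,…,N}, a vector ℓ = (ℓ_1,…,ℓ_h) ∈ (ℝ_{>0})^h with rationally independent components, and a matrix B ∈ M_{N,h}(ℕ) with rank(B) = h, such that Λ = Bℓ. -/

import Mathlib

open Finset Submodule Set


def InCone {h : ℕ} (m : Fin h → ℝ) (x : ℝ) : Prop :=
  ∃ c : Fin h → ℕ, x = ∑ k, (c k : ℝ) * m k

lemma sum_single_aux {h : ℕ} (m : Fin h → ℝ) (x : Fin h) (u : ℕ) :
    ∑ k, ((if k = x then u else 0 : ℕ) : ℝ) * m k = u * m x := by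
  rw [Finset.sum_eq_single x] <;> simp (config := {contextual := true})

lemma sum_pair_aux {h : ℕ} (m : Fin h → ℝ) {x y : Fin h} (hxy : x ≠ y) (u v : ℕ) :
    ∑ k, ((if k = x then u else if k = y then v else 0 : ℕ) : ℝ) * m k
      = u * m x + v * m y := by
  have h1 : ∀ k ∈ Finset.univ, ((if k = x then u else if k = y then v else 0 : ℕ) : ℝ) * m k
      = ((if k = x then u else 0 : ℕ) : ℝ) * m k + ((if k = y then v else 0 : ℕ) : ℝ) * m k := by
    intro k _
    rcases eq_or_ne k x with rfl | hkx
    · simp [hxy]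
    · simp [hkx]
  rw [Finset.sum_congr rfl h1, Finset.sum_add_distrib, sum_single_aux, sum_single_aux]

lemma inCone_trans {h h' : ℕ} {m : Fin h → ℝ} {v : Fin h' → ℝ} {x : ℝ}
    (hv : ∀ j, InCone m (v j)) (n : Fin h' → ℕ) (hx : x = ∑ j, (n j : ℝ) * v j) :
    InCone m x := by
  choose c hc using hv
  refine ⟨fun k => ∑ j, n j * c j k, ?_⟩
  subst hx
  push_cast
  simp_rw [Finset.sum_mul, hc]
  rw [Finset.sum_comm]
  congr 1; ext j
  rw [Finset.mul_sum]
  congr 1; ext k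
  ring

lemma inCone_mem_span {h : ℕ} {m : Fin h → ℝ} {x : ℝ} (hx : InCone m x) :
    x ∈ span ℚ (Set.range m) := by
  obtain ⟨c, rfl⟩ := hx
  refine Submodule.sum_mem _ (fun k _ => ?_)
  have : ((c k : ℝ)) * m k = ((c k : ℚ)) • m k := by
    rw [Rat.smul_def]; push_cast; ring
  rw [this]
  exact Submodule.smul_mem _ _ (Submodule.subset_span ⟨k, rfl⟩)

lemma indep_of_span {h : ℕ} {ℓ m : Fin h → ℝ} (hind : LinearIndependent ℚ ℓ)
    (hspan : span ℚ (Set.range m) = span ℚ (Set.range ℓ)) : LinearIndependent ℚ m := by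
  rw [linearIndependent_iff_card_eq_finrank_span] at hind ⊢
  rw [Set.finrank, hspan]
  exact hind

set_option maxHeartbeats 1000000 in
lemma core {h : ℕ} : ∀ (t : ℕ) (ℓ : Fin h → ℝ), (∀ j, 0 < ℓ j) → LinearIndependent ℚ ℓ →
    ∀ q : Fin h → ℤ, (Finset.univ.filter (fun j => q j < 0)).card ≤ t →
    0 < ∑ j, (q j : ℝ) * ℓ j →
    ∃ m : Fin h → ℝ, (∀ j, 0 < m j) ∧ LinearIndependent ℚ m ∧
      span ℚ (Set.range m) = span ℚ (Set.range ℓ) ∧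
      (∀ j, InCone m (ℓ j)) ∧ InCone m (∑ j, (q j : ℝ) * ℓ j) := by
  intro t
  induction t with
  | zero =>
    intro ℓ hpos hind q hcard hsum
    have hnn : ∀ j, 0 ≤ q j := by
      intro j
      by_contra hj
      have hmem : j ∈ Finset.univ.filter (fun j => q j < 0) := by
        simp [not_le] at hj ⊢; exact hj
      have := Finset.card_pos.mpr ⟨j, hmem⟩
      omega
    refine ⟨ℓ, hpos, hind, rfl, fun j => ⟨fun k => if k = j then 1 else 0, by rw [sum_single_aux]; simp⟩, ⟨fun j => (q j).toNat, ?_⟩⟩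
    refine Finset.sum_congr rfl (fun j _ => ?_)
    have : (((q j).toNat : ℝ)) = (q j : ℝ) := by exact_mod_cast Int.toNat_of_nonneg (hnn j)
    simp [this]
  | succ t IH =>
    intro ℓ hpos hind q hcard hsum
    by_cases hex : ∃ a, q a < 0
    swap
    · push_neg at hex
      refine ⟨ℓ, hpos, hind, rfl, fun j => ⟨fun k => if k = j then 1 else 0, by rw [sum_single_aux]; simp⟩, ⟨fun j => (q j).toNat, ?_⟩⟩
      refine Finset.sum_congr rfl (fun j _ => ?_)
      have : (((q j).toNat : ℝ)) = (q j : ℝ) := by exact_mod_cast Int.toNat_of_nonneg (hex j)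
      simp [this]
    obtain ⟨a, ha⟩ := hex
    set P : Finset (Fin h) := Finset.univ.filter (fun j => 0 < q j) with hPdef
    have haP : a ∉ P := by simp [hPdef]; omega
    have hS' : ∑ j ∈ Finset.univ \ P, (q j : ℝ) * ℓ j ≤ (q a : ℝ) * ℓ a := by
      have hmem : a ∈ Finset.univ \ P := by simp [haP]
      rw [← Finset.add_sum_erase _ _ hmem]
      have : ∑ j ∈ (Finset.univ \ P).erase a, (q j : ℝ) * ℓ j ≤ 0 := by
        refine Finset.sum_nonpos (fun j hj => ?_)
        have hj' : ¬ 0 < q j := by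
          simp [hPdef] at hj; omega
        have : (q j : ℝ) ≤ 0 := by exact_mod_cast (not_lt.mp hj')
        exact mul_nonpos_of_nonpos_of_nonneg this (hpos j).le
      linarith
    set S : ℝ := ∑ b ∈ P, (q b : ℝ) * ℓ b with hSdef
    have hkey : (-(q a) : ℝ) * ℓ a < S := by
      have : (∑ j, (q j : ℝ) * ℓ j) = S + ∑ j ∈ Finset.univ \ P, (q j : ℝ) * ℓ j := by
        rw [hSdef, ← Finset.sum_filter_add_sum_filter_not Finset.univ (fun j => 0 < q j)]
        congr 1
        apply Finset.sum_congr _ (fun _ _ => rfl)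
        ext j; simp [hPdef]
      nlinarith [hsum]
    have hSpos : 0 < S := by
      have : 0 < (-(q a) : ℝ) * ℓ a := by
        have : (0:ℝ) < -(q a : ℝ) := by exact_mod_cast (by omega : (0:ℤ) < -q a)
        exact mul_pos this (hpos a)
      linarith
    have hP : P.Nonempty := by
      rcases Finset.eq_empty_or_nonempty P with hPe | hPn
      · exfalso; rw [hSdef, hPe] at hSpos; simp at hSpos
      · exact hPn
    set A : ℝ := (-(q a) : ℝ) * ℓ a with hAdef
    set c : ℝ := (A / S + 1) / 2 with hcdef
    have hApos : 0 < A := by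
      have : (0:ℝ) < -(q a : ℝ) := by exact_mod_cast (by omega : (0:ℤ) < -q a)
      exact mul_pos this (hpos a)
    have hAS : A / S < 1 := (div_lt_one hSpos).mpr hkey
    have hc1 : c < 1 := by rw [hcdef]; linarith
    have hc0 : A / S < c := by
      rw [hcdef]; linarith
    have hcpos : 0 < c := by
      have : 0 < A / S := div_pos hApos hSpos
      linarith
    have h1c : 0 < 1 - c := by linarith
    set ε : ℝ := P.inf' hP ℓ with hεdef
    have hεpos : 0 < ε := by
      rw [hεdef, Finset.lt_inf'_iff]
      exact fun b _ => hpos b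
    obtain ⟨M, hM⟩ := exists_nat_gt (max 1 (ℓ a / ((1 - c) * ε)))
    have hMpos : (0:ℝ) < M := lt_trans (lt_of_lt_of_le one_pos (le_max_left _ _)) hM
    have hM2 : ∀ b ∈ P, ℓ a < (M:ℝ) * ((1-c) * ℓ b) := by
      intro b hb
      have hεb : ε ≤ ℓ b := Finset.inf'_le ℓ hb
      have h3 : ℓ a / ((1-c) * ε) < M := lt_of_le_of_lt (le_max_right _ _) hM
      rw [div_lt_iff₀ (by positivity)] at h3
      nlinarith [mul_le_mul_of_nonneg_left hεb (by positivity : (0:ℝ) ≤ (M:ℝ)*(1-c))]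
    set tt : Fin h → ℕ := fun b => ⌈(M:ℝ) * c * ℓ b / ℓ a⌉₊ with httdef
    have F1 : ∀ b ∈ P, (tt b : ℝ) * ℓ a < (M:ℝ) * ℓ b := by
      intro b hb
      have harg : (0:ℝ) ≤ (M:ℝ) * c * ℓ b / ℓ a :=
        div_nonneg (mul_pos (mul_pos hMpos hcpos) (hpos b)).le (hpos a).le
      have hceil : (tt b : ℝ) < (M:ℝ) * c * ℓ b / ℓ a + 1 :=
        Nat.ceil_lt_add_one harg
      have h4 := hM2 b hb
      have h5 := div_mul_cancel₀ ((M:ℝ) * c * ℓ b) (hpos a).ne'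
      nlinarith [hpos a]
    have F2 : (M:ℝ) * (-(q a:ℝ)) ≤ ∑ b ∈ P, (q b : ℝ) * (tt b) := by
      rw [← mul_le_mul_iff_left₀ (hpos a)]
      have step : ∀ b ∈ P, ((M:ℝ)*c) * ((q b:ℝ) * ℓ b) ≤ (q b:ℝ) * tt b * ℓ a := by
        intro b hb
        have hqb : (0:ℝ) ≤ (q b:ℝ) := by
          have : 0 < q b := by simp [hPdef] at hb; exact hb
          exact_mod_cast this.le
        have hle := Nat.le_ceil ((M:ℝ) * c * ℓ b / ℓ a)
        have h6 := mul_le_mul_of_nonneg_left hle hqb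
        have hla : ℓ a ≠ 0 := (hpos a).ne'
        calc ((M:ℝ)*c) * ((q b:ℝ)*ℓ b) = ((q b:ℝ) * ((M:ℝ)*c*ℓ b/ℓ a)) * ℓ a := by
              field_simp
        _ ≤ (q b:ℝ) * tt b * ℓ a := mul_le_mul_of_nonneg_right h6 (hpos a).le
      have hsum2 := Finset.sum_le_sum step
      rw [← Finset.mul_sum, ← Finset.sum_mul] at hsum2
      have hAc : A < c * S := by rw [div_lt_iff₀ hSpos] at hc0; linarith
      nlinarith [hMpos]
    set m : Fin h → ℝ := fun j => if j = a then ℓ a / M else if 0 < q j then ℓ j - tt j * ℓ a / M else ℓ j with hmdef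
    have hma : m a = ℓ a / M := by simp [hmdef]
    have hmb : ∀ b ∈ P, m b = ℓ b - tt b * ℓ a / M := by
      intro b hb
      have hba : b ≠ a := fun e => haP (e ▸ hb)
      have hqb : 0 < q b := by simp [hPdef] at hb; exact hb
      simp [hmdef, hba, hqb]
    have hmo : ∀ j, j ≠ a → ¬ 0 < q j → m j = ℓ j := by
      intro j hja hqj; simp [hmdef, hja, hqj]
    have hmpos : ∀ j, 0 < m j := by
      intro j
      rcases eq_or_ne j a with rfl | hja
      · rw [hma]; exact div_pos (hpos j) hMpos
      · by_cases hqj : 0 < q j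
        · have hjP : j ∈ P := by simp [hPdef, hqj]
          rw [hmb j hjP, sub_pos, div_lt_iff₀ hMpos]
          nlinarith [F1 j hjP]
        · rw [hmo j hja hqj]; exact hpos j
    have hcone : ∀ j, InCone m (ℓ j) := by
      intro j
      rcases eq_or_ne j a with rfl | hja
      · refine ⟨fun k => if k = j then M else 0, ?_⟩
        rw [sum_single_aux, hma]
        field_simp
      · by_cases hqj : 0 < q j
        · have hjP : j ∈ P := by simp [hPdef, hqj]
          refine ⟨fun k => if k = j then 1 else if k = a then tt j else 0, ?_⟩
          rw [sum_pair_aux m hja 1 (tt j), hmb j hjP, hma]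
          push_cast
          field_simp
          ring
        · exact ⟨fun k => if k = j then 1 else 0, by rw [sum_single_aux, hmo j hja hqj]; simp⟩
    have hspan : span ℚ (Set.range m) = span ℚ (Set.range ℓ) := by
      apply le_antisymm
      · rw [span_le]
        rintro x ⟨j, rfl⟩
        rcases eq_or_ne j a with rfl | hja
        · rw [hma]
          have hrw : ℓ j / M = (1/(M:ℚ)) • ℓ j := by
            rw [Rat.smul_def]; push_cast; ring
          rw [hrw]
          exact Submodule.smul_mem _ _ (Submodule.subset_span ⟨j, rfl⟩)
        · by_cases hqj : 0 < q j
          · have hjP : j ∈ P := by simp [hPdef, hqj]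
            rw [hmb j hjP]
            have h2 : ((tt j : ℝ) * ℓ a / M : ℝ) = ((tt j : ℚ)/(M:ℚ)) • ℓ a := by
              rw [Rat.smul_def]; push_cast; ring
            rw [h2]
            exact Submodule.sub_mem _ (Submodule.subset_span ⟨j, rfl⟩)
              (Submodule.smul_mem _ _ (Submodule.subset_span ⟨a, rfl⟩))
          · rw [hmo j hja hqj]; exact Submodule.subset_span ⟨j, rfl⟩
      · rw [span_le]
        rintro x ⟨j, rfl⟩
        exact inCone_mem_span (hcone j)
    set q' : Fin h → ℤ := fun j => if j = a then M * q a + ∑ b ∈ P, q b * tt b else q j with hq'def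
    have hq'a : 0 ≤ q' a := by
      have hr : (0:ℝ) ≤ ((M * q a + ∑ b ∈ P, q b * tt b : ℤ) : ℝ) := by
        push_cast
        linarith [F2]
      have hz : (0:ℤ) ≤ M * q a + ∑ b ∈ P, q b * tt b := by exact_mod_cast hr
      simpa [hq'def] using hz
    have key : ∑ j, (q' j : ℝ) * m j = ∑ j, (q j : ℝ) * ℓ j := by
      have hg : ∀ j, (q' j : ℝ) * m j - (q j : ℝ) * ℓ j
          = (if j = a then (∑ b ∈ P, (q b:ℝ) * tt b) else if 0 < q j then -((q j:ℝ) * tt j) else 0) * (ℓ a / M) := by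
        intro j
        rcases eq_or_ne j a with rfl | hja
        · simp only [if_pos rfl, hq'def, hma]
          push_cast
          field_simp
          ring
        · by_cases hqj : 0 < q j
          · have hjP : j ∈ P := by simp [hPdef, hqj]
            have hq'j : q' j = q j := by simp [hq'def, hja]
            rw [if_neg hja, if_pos hqj, hq'j, hmb j hjP]
            ring
          · have hq'j : q' j = q j := by simp [hq'def, hja]
            rw [if_neg hja, if_neg hqj, hq'j, hmo j hja hqj]
            ring
      have hzero : ∑ j, ((q' j : ℝ) * m j - (q j : ℝ) * ℓ j) = 0 := by
        rw [Finset.sum_congr rfl (fun j _ => hg j), ← Finset.sum_mul]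
        have hif : ∑ j, (if j = a then (∑ b ∈ P, (q b:ℝ) * tt b) else if 0 < q j then -((q j:ℝ) * tt j) else 0) = 0 := by
          rw [← Finset.add_sum_erase _ _ (Finset.mem_univ a), if_pos rfl]
          have he : ∑ j ∈ Finset.univ.erase a, (if j = a then (∑ b ∈ P, (q b:ℝ) * tt b) else if 0 < q j then -((q j:ℝ) * tt j) else 0) = ∑ j ∈ Finset.univ.erase a, (if 0 < q j then -((q j:ℝ) * tt j) else 0) :=
            Finset.sum_congr rfl (fun j hj => by rw [if_neg (Finset.ne_of_mem_erase hj)])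
          rw [he, Finset.sum_erase _ (by rw [if_neg (by omega : ¬ 0 < q a)]),
            ← Finset.sum_filter, ← hPdef, ← Finset.sum_add_distrib]
          simp
        rw [hif, zero_mul]
      rw [Finset.sum_sub_distrib] at hzero
      linarith
    have hq'sum : 0 < ∑ j, (q' j : ℝ) * m j := by rw [key]; exact hsum
    have hcard' : (Finset.univ.filter (fun j => q' j < 0)).card ≤ t := by
      have hsub : Finset.univ.filter (fun j => q' j < 0) ⊆ (Finset.univ.filter (fun j => q j < 0)).erase a := by
        intro j hj
        simp only [Finset.mem_filter, Finset.mem_univ, true_and] at hj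
        have hja : j ≠ a := by rintro rfl; omega
        have hq'j : q' j = q j := by simp [hq'def, hja]
        refine Finset.mem_erase.mpr ⟨hja, ?_⟩
        simp only [Finset.mem_filter, Finset.mem_univ, true_and]
        omega
      have h1 := Finset.card_le_card hsub
      have h2 : a ∈ Finset.univ.filter (fun j => q j < 0) := by simp [ha]
      have h3 := Finset.card_erase_of_mem h2
      have h4 := Finset.card_pos.mpr ⟨a, h2⟩
      omega
    have hindm : LinearIndependent ℚ m := indep_of_span hind hspan
    obtain ⟨m', hm'pos, hm'ind, hm'span, hm'cone, hm'sum⟩ := IH m hmpos hindm q' hcard' hq'sum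
    refine ⟨m', hm'pos, hm'ind, hm'span.trans hspan, ?_, ?_⟩
    · intro j
      obtain ⟨cc, hcc⟩ := hcone j
      exact inCone_trans hm'cone cc hcc
    · rw [← key]; exact hm'sum

lemma rat_clear (r : ℚ) {n : ℕ} (hd : r.den ∣ n) :
    ((r.num * ((n / r.den : ℕ) : ℤ) : ℤ) : ℚ) = r * n := by
  obtain ⟨k, hk⟩ := hd
  subst hk
  rw [Nat.mul_div_cancel_left _ r.pos]
  push_cast
  rw [show ((r.den : ℚ) * k) = (r.den * k : ℚ) from by push_cast; ring, ← mul_assoc]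
  rw [← Rat.mul_den_eq_num]

lemma main : ∀ (N : ℕ) (Λ : Fin (N+1) → ℝ), (∀ i, 0 < Λ i) →
    ∃ (h : ℕ) (ℓ : Fin h → ℝ), 1 ≤ h ∧ h ≤ N+1 ∧ (∀ j, 0 < ℓ j) ∧ LinearIndependent ℚ ℓ ∧
      span ℚ (Set.range ℓ) = span ℚ (Set.range Λ) ∧ ∀ i, InCone ℓ (Λ i) := by
  intro N
  induction N with
  | zero =>
    intro Λ hΛ
    haveI : Unique (Fin (0+1)) := ⟨⟨0⟩, fun a => Fin.ext (by omega)⟩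
    refine ⟨1, Λ, le_refl 1, le_refl 1, hΛ, ?_, rfl, ?_⟩
    · exact linearIndependent_unique_iff.mpr (hΛ _).ne'
    · intro i
      refine ⟨fun _ => 1, ?_⟩
      have hi : i = ⟨0, by omega⟩ := Fin.ext (by omega)
      subst hi
      rw [Fin.sum_univ_succ]
      simp
  | succ N IH =>
    intro Λ hΛ
    set Λ' : Fin (N+1) → ℝ := fun i => Λ i.castSucc with hΛ'def
    obtain ⟨h, ℓ, hh1, hh2, hpos, hind, hspan, hcone⟩ := IH Λ' (fun i => hΛ _)
    set lam : ℝ := Λ (Fin.last (N+1)) with hlamdef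
    have hlampos : 0 < lam := hΛ _
    have hrange : Set.range Λ = insert lam (Set.range Λ') := by
      ext x
      constructor
      · rintro ⟨i, rfl⟩
        induction i using Fin.lastCases with
        | last => exact Set.mem_insert _ _
        | cast i => exact Set.mem_insert_of_mem _ ⟨i, rfl⟩
      · rintro (rfl | ⟨i, rfl⟩)
        · exact ⟨Fin.last _, rfl⟩
        · exact ⟨i.castSucc, rfl⟩
    by_cases hmem : lam ∈ span ℚ (Set.range ℓ)
    · -- lam is in the span: rescale and fix signs via `core`
      obtain ⟨r, hr⟩ := (mem_span_range_iff_exists_fun ℚ).mp hmem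
      set d : ℕ := ∏ j, (r j).den with hddef
      have hdpos : 0 < d := Finset.prod_pos (fun j _ => (r j).pos)
      have hdR : (0:ℝ) < d := by exact_mod_cast hdpos
      set m0 : Fin h → ℝ := fun j => ℓ j / d with hm0def
      have hm0pos : ∀ j, 0 < m0 j := fun j => div_pos (hpos j) hdR
      have hm0span : span ℚ (Set.range m0) = span ℚ (Set.range ℓ) := by
        apply le_antisymm
        · rw [span_le]
          rintro x ⟨j, rfl⟩
          have : m0 j = (1/(d:ℚ)) • ℓ j := by
            rw [Rat.smul_def, hm0def]; push_cast; ring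
          rw [this]
          exact Submodule.smul_mem _ _ (Submodule.subset_span ⟨j, rfl⟩)
        · rw [span_le]
          rintro x ⟨j, rfl⟩
          have : ℓ j = ((d:ℚ)) • m0 j := by
            rw [Rat.smul_def, hm0def]
            field_simp
            simp
          rw [this]
          exact Submodule.smul_mem _ _ (Submodule.subset_span ⟨j, rfl⟩)
      set q : Fin h → ℤ := fun j => (r j).num * (((d / (r j).den : ℕ) : ℤ)) with hqdef
      have hq : ∀ j, ((q j : ℚ)) = r j * d := fun j =>
        rat_clear (r j) (Finset.dvd_prod_of_mem _ (Finset.mem_univ j))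
      have hlamsum : lam = ∑ j, (q j : ℝ) * m0 j := by
        rw [← hr]
        refine Finset.sum_congr rfl (fun j _ => ?_)
        have hqR : ((q j : ℝ)) = (r j : ℝ) * d := by
          have := hq j
          have := congrArg (fun x : ℚ => (x : ℝ)) this
          push_cast at this
          exact this
        rw [Rat.smul_def, hqR, hm0def]
        field_simp
      have hsumpos : 0 < ∑ j, (q j : ℝ) * m0 j := by rw [← hlamsum]; exact hlampos
      obtain ⟨m, hmpos, hmind, hmspan, hmcone, hmlam⟩ :=
        core (Finset.univ.filter (fun j => q j < 0)).card m0 hm0pos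
          (indep_of_span hind hm0span) q (le_refl _) hsumpos
      have hconeℓ : ∀ j, InCone m (ℓ j) := by
        intro j
        refine inCone_trans hmcone (fun k => if k = j then d else 0) ?_
        rw [sum_single_aux, hm0def]
        field_simp
      refine ⟨h, m, hh1, hh2.trans (by omega), hmpos, hmind,
        ?_, ?_⟩
      · rw [hmspan, hm0span, hspan, hrange, Submodule.span_insert_eq_span]
        rw [← hspan]
        exact hmem
      · intro i
        induction i using Fin.lastCases with
        | last => rw [← hlamdef, hlamsum]; exact hmlam
        | cast i =>
          obtain ⟨cc, hcc⟩ := hcone i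
          exact inCone_trans hconeℓ cc hcc
    · -- lam is not in the span: extend the basis
      refine ⟨h + 1, Fin.cons lam ℓ, by omega, by omega, ?_, ?_, ?_, ?_⟩
      · intro j
        induction j using Fin.cases with
        | zero => exact hlampos
        | succ j => simpa using hpos j
      · exact linearIndependent_fin_cons.mpr ⟨hind, hmem⟩
      · rw [Fin.range_cons, Submodule.span_insert, hspan, hrange, Submodule.span_insert]
      · intro i
        induction i using Fin.lastCases with
        | last =>
          refine ⟨Fin.cons 1 (fun _ => 0), ?_⟩
          rw [Fin.sum_univ_succ]
          simp
          rfl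
        | cast i =>
          obtain ⟨cc, hcc⟩ := hcone i
          refine ⟨Fin.cons 0 cc, ?_⟩
          rw [Fin.sum_univ_succ]
          simpa using hcc

/-- Every `Λ ∈ (ℝ_{>0})^N` can be written as `Λ = B ℓ` with
`B ∈ M_{N,h}(ℕ)` of rank `h` and `ℓ ∈ (ℝ_{>0})^h` with rationally independent
components, for some `h ∈ {1,…,N}`. -/
theorem stmt_3 {N : ℕ} (hN : 0 < N) (Λ : Fin N → ℝ) (hΛ : ∀ i, 0 < Λ i) :
    ∃ (h : ℕ), 1 ≤ h ∧ h ≤ N ∧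
      ∃ (ℓ : Fin h → ℝ) (B : Matrix (Fin N) (Fin h) ℕ),
        (∀ j, 0 < ℓ j) ∧ LinearIndependent ℚ ℓ ∧
        (B.map (fun x : ℕ => (x : ℝ))).rank = h ∧
        ∀ i, Λ i = ∑ j, (B i j : ℝ) * ℓ j := by
  obtain ⟨N', rfl⟩ : ∃ N', N = N' + 1 := ⟨N - 1, by omega⟩
  obtain ⟨h, ℓ, hh1, hh2, hpos, hind, hspan, hcone⟩ := main N' Λ hΛ
  choose B hB using hcone
  set Bmat : Matrix (Fin (N'+1)) (Fin h) ℕ := Matrix.of (fun i j => B i j) with hBmatdef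
  refine ⟨h, hh1, hh2, ℓ, Bmat, hpos, hind, ?_, hB⟩
  -- rank computation
  set φ : (Fin h → ℚ) →ₗ[ℚ] ℝ := Fintype.linearCombination ℚ ℓ with hφdef
  have hφapp : ∀ w : Fin h → ℚ, φ w = ∑ k, w k • ℓ k := fun w => rfl
  have hφinj : Function.Injective φ := by
    intro x y hxy
    have hz : φ (x - y) = 0 := by rw [map_sub, hxy, sub_self]
    rw [hφapp] at hz
    have := Fintype.linearIndependent_iff.mp hind (x - y) (by simpa using hz)
    funext k
    have hk := this k
    simpa [sub_eq_zero] using hk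
  have hφrange : LinearMap.range φ = span ℚ (Set.range ℓ) := by
    apply le_antisymm
    · rintro x ⟨w, rfl⟩
      rw [hφapp]
      exact Submodule.sum_mem _ (fun k _ =>
        Submodule.smul_mem _ _ (Submodule.subset_span ⟨k, rfl⟩))
    · rw [span_le]
      rintro x ⟨k, rfl⟩
      refine ⟨Pi.single k 1, ?_⟩
      rw [hφapp, Finset.sum_eq_single k]
      · simp
      · intro b _ hbk
        simp [Pi.single_eq_of_ne hbk]
      · simp
  set rQ : Fin (N'+1) → (Fin h → ℚ) := fun i k => (B i k : ℚ) with hrQdef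
  have hφrQ : ∀ i, φ (rQ i) = Λ i := by
    intro i
    rw [hφapp, hB i]
    refine Finset.sum_congr rfl (fun k _ => ?_)
    rw [Rat.smul_def]
    push_cast
    rfl
  have hrQspan : span ℚ (Set.range rQ) = ⊤ := by
    apply Submodule.map_injective_of_injective hφinj
    rw [Submodule.map_span, ← Set.range_comp]
    have : φ ∘ rQ = Λ := funext hφrQ
    rw [this, Submodule.map_top, hφrange, hspan]
  set ρ : Fin (N'+1) → (Fin h → ℝ) := fun i k => (B i k : ℝ) with hρdef
  have hsingle : ∀ k : Fin h, Pi.single k (1:ℝ) ∈ span ℝ (Set.range ρ) := by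
    intro k
    have hk : Pi.single k (1:ℚ) ∈ span ℚ (Set.range rQ) := hrQspan ▸ Submodule.mem_top
    obtain ⟨c, hc⟩ := (mem_span_range_iff_exists_fun ℚ).mp hk
    have hcR : ∑ i, (c i : ℝ) • ρ i = Pi.single k (1:ℝ) := by
      funext j
      have := congrFun hc j
      simp only [Finset.sum_apply, Pi.smul_apply, smul_eq_mul] at this ⊢
      have hcast := congrArg (fun x : ℚ => (x : ℝ)) this
      push_cast at hcast
      have hsgl : (((Pi.single k (1:ℚ) : Fin h → ℚ) j : ℚ) : ℝ) = (Pi.single k (1:ℝ) : Fin h → ℝ) j := by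
        rcases eq_or_ne j k with rfl | hjk
        · simp
        · simp [Pi.single_eq_of_ne hjk]
      rw [← hsgl, ← hcast]
      refine Finset.sum_congr rfl (fun x _ => ?_)
      simp only [hρdef, hrQdef]
      push_cast
      ring
    rw [← hcR]
    exact Submodule.sum_mem _ (fun i _ =>
      Submodule.smul_mem _ _ (Submodule.subset_span ⟨i, rfl⟩))
  have hρspan : span ℝ (Set.range ρ) = ⊤ := by
    rw [eq_top_iff]
    intro x _
    have hx : x = ∑ k, x k • (Pi.single k (1:ℝ) : Fin h → ℝ) := by
      funext j
      simp only [Finset.sum_apply, Pi.smul_apply, smul_eq_mul]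
      rw [Finset.sum_eq_single j] <;>
        simp (config := {contextual := true}) [Pi.single_eq_of_ne', Pi.single_eq_same]
    rw [hx]
    exact Submodule.sum_mem _ (fun k _ => Submodule.smul_mem _ _ (hsingle k))
  have hrows : Set.range (Bmat.map (fun x : ℕ => (x : ℝ))).row = Set.range ρ := rfl
  rw [Matrix.rank_eq_finrank_span_row, hrows, hρspan, finrank_top, Module.finrank_pi]
  simp
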